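/- For every integer c ≥ 1, there exists a finite connected graph G with minimum degree at least c that is strongly non-stackable, i.e., G is not t-stackable for any vertex t of G. -/

import Mathlib

/-- A legal cup-stacking move in the graph `G`. -/
def CupStep {V : Type*} [DecidableEq V] (G : SimpleGraph V) (c c' : V → ℕ) : Prop :=
  ∃ x y : V, x ≠ y ∧ 0 < c x ∧ 0 < c y ∧ G.dist x y = c x ∧
    c' = Function.update (Function.update c x 0) y (c y + c x)

/-- `G` is `t`-stackable. -/
def TStackable {V : Type*} [DecidableEq V] (G : SimpleGraph V) (t : V) : Prop :=
  ∃ c : V → ℕ, Relation.ReflTransGen (CupStep G) (fun _ => 1) c ∧ ∀ v, v ≠ t → c v = 0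
open SimpleGraph

namespace CupNS

abbrev VV (k : ℕ) : Type := (Fin 2 × Fin k) ⊕ (Fin 2 × Fin (k + 2))

def GG (k : ℕ) : SimpleGraph (VV k) where
  Adj u v := match u, v with
    | .inl a, .inl b => a ≠ b
    | .inl a, .inr b => a.1 = b.1
    | .inr a, .inl b => b.1 = a.1
    | .inr _, .inr _ => False
  symm := by
    refine ⟨?_⟩
    rintro (a | a) (b | b) h
    · exact Ne.symm h
    · exact h
    · exact h
    · exact h.elim
  loopless := by
    refine ⟨?_⟩
    rintro (a | a) h
    · exact h rfl
    · exact h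

variable {k : ℕ}

@[simp] lemma adj_inl_inl {a b : Fin 2 × Fin k} : (GG k).Adj (.inl a) (.inl b) ↔ a ≠ b := Iff.rfl
@[simp] lemma adj_inl_inr {a : Fin 2 × Fin k} {b : Fin 2 × Fin (k+2)} :
    (GG k).Adj (.inl a) (.inr b) ↔ a.1 = b.1 := Iff.rfl
@[simp] lemma adj_inr_inl {a : Fin 2 × Fin (k+2)} {b : Fin 2 × Fin k} :
    (GG k).Adj (.inr a) (.inl b) ↔ b.1 = a.1 := Iff.rfl
@[simp] lemma adj_inr_inr {a b : Fin 2 × Fin (k+2)} : ¬ (GG k).Adj (.inr a) (.inr b) :=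
  fun h => h

lemma dist_self' (v : VV k) : (GG k).dist v v = 0 := SimpleGraph.dist_self

lemma dLL {a b : Fin 2 × Fin k} (h : a ≠ b) : (GG k).dist (.inl a) (.inl b) = 1 :=
  dist_eq_one_iff_adj.mpr (by simpa using h)

lemma dLR_same {j : Fin 2} {i : Fin k} {i' : Fin (k+2)} :
    (GG k).dist (.inl (j, i)) (.inr (j, i')) = 1 :=
  dist_eq_one_iff_adj.mpr (by simp)

lemma dRL_same {j : Fin 2} {i : Fin (k+2)} {i' : Fin k} :
    (GG k).dist (.inr (j, i)) (.inl (j, i')) = 1 :=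
  dist_eq_one_iff_adj.mpr (by simp)

lemma shape1 {j : Fin 2} {i : Fin (k+2)} {w : VV k} (h : (GG k).dist (.inr (j, i)) w = 1) :
    ∃ b, w = .inl (j, b) := by
  have := dist_eq_one_iff_adj.mp h
  obtain (⟨j', i'⟩ | ⟨j', i'⟩) := w
  · simp only [adj_inr_inl] at this
    exact ⟨i', by rw [this]⟩
  · simp at this

def phi : VV k → ℕ
  | .inl a => 1 + a.1.val
  | .inr a => 3 * a.1.val

lemma phi_adj {u v : VV k} (h : (GG k).Adj u v) : phi v ≤ phi u + 1 ∧ phi u ≤ phi v + 1 := by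
  obtain (⟨j, i⟩ | ⟨j, i⟩) := u <;> obtain (⟨j', i'⟩ | ⟨j', i'⟩) := v <;>
      simp only [adj_inl_inl, adj_inl_inr, adj_inr_inl, adj_inr_inr, phi] at h ⊢ <;>
      first
        | exact h.elim
        | (have h1 : j.val < 2 := j.isLt
           have h2 : j'.val < 2 := j'.isLt
           first
             | omega
             | (replace h := congrArg Fin.val h; simp only at h; omega))

lemma phi_walk {u v : VV k} (p : (GG k).Walk u v) : phi v ≤ phi u + p.length := by
  induction p with
  | nil => simp
  | cons h q ih =>
      have := (phi_adj h).1
      simp only [Walk.length_cons]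
      omega

section Conn

variable (hk : 0 < k)
include hk

def z0 (hk : 0 < k) : Fin k := ⟨0, hk⟩

lemma reach_hub (j0 : Fin 2) (v : VV k) : (GG k).Reachable v (.inl (j0, z0 hk)) := by
  obtain (⟨j, i⟩ | ⟨j, i⟩) := v
  · by_cases h : (j, i) = (j0, z0 hk)
    · rw [h]
    · exact (Adj.reachable (by simpa using h))
  · refine Reachable.trans (Adj.reachable (v := Sum.inl (j, z0 hk)) (by simp)) ?_
    by_cases h : (j, (z0 hk : Fin k)) = (j0, z0 hk)
    · rw [h]
    · exact (Adj.reachable (by simpa using h))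

lemma conn : (GG k).Connected := by
  rw [connected_iff]
  exact ⟨fun u v => (reach_hub hk 0 u).trans (reach_hub hk 0 v).symm, ⟨.inl (0, z0 hk)⟩⟩

lemma phi_dist (u v : VV k) : phi v ≤ phi u + (GG k).dist u v := by
  obtain ⟨p, hp⟩ := (conn hk).exists_walk_length_eq_dist u v
  have := phi_walk p
  omega

lemma dRR_same {j : Fin 2} {i i' : Fin (k+2)} (h : i ≠ i') :
    (GG k).dist (.inr (j, i)) (.inr (j, i')) = 2 := by
  have a1 : (GG k).Adj (.inr (j, i)) (.inl (j, z0 hk)) := by simp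
  have a2 : (GG k).Adj (.inl (j, z0 hk)) (.inr (j, i')) := by simp
  have hle := SimpleGraph.dist_le (Walk.cons a1 (Walk.cons a2 Walk.nil))
  simp only [Walk.length_cons, Walk.length_nil] at hle
  have h0 : (GG k).dist (.inr (j, i)) (.inr (j, i')) ≠ 0 := by
    simp only [ne_eq, (conn hk).dist_eq_zero_iff]
    simp [h]
  have h1 : (GG k).dist (.inr (j, i)) (.inr (j, i')) ≠ 1 := by
    simp only [ne_eq, dist_eq_one_iff_adj]
    simp
  omega

lemma dLR_diff {j j' : Fin 2} {i : Fin k} {i' : Fin (k+2)} (h : j ≠ j') :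
    (GG k).dist (.inl (j, i)) (.inr (j', i')) = 2 := by
  have a1 : (GG k).Adj (.inl (j, i)) (.inl (j', z0 hk)) := by simp [Prod.ext_iff, h]
  have a2 : (GG k).Adj (.inl (j', z0 hk)) (.inr (j', i')) := by simp
  have hle := SimpleGraph.dist_le (Walk.cons a1 (Walk.cons a2 Walk.nil))
  simp only [Walk.length_cons, Walk.length_nil] at hle
  have h0 : (GG k).dist (.inl (j, i)) (.inr (j', i')) ≠ 0 := by
    simp only [ne_eq, (conn hk).dist_eq_zero_iff]
    simp
  have h1 : (GG k).dist (.inl (j, i)) (.inr (j', i')) ≠ 1 := by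
    simp only [ne_eq, dist_eq_one_iff_adj]
    simp [h]
  omega

lemma dRL_diff {j j' : Fin 2} {i : Fin (k+2)} {i' : Fin k} (h : j ≠ j') :
    (GG k).dist (.inr (j, i)) (.inl (j', i')) = 2 := by
  rw [SimpleGraph.dist_comm]
  exact dLR_diff hk (Ne.symm h)

lemma dRR_diff {j j' : Fin 2} {i i' : Fin (k+2)} (h : j ≠ j') :
    (GG k).dist (.inr (j, i)) (.inr (j', i')) = 3 := by
  have a1 : (GG k).Adj (.inr (j, i)) (.inl (j, z0 hk)) := by simp
  have a2 : (GG k).Adj (.inl (j, z0 hk)) (.inl (j', z0 hk)) := by simp [Prod.ext_iff, h]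
  have a3 : (GG k).Adj (.inl (j', z0 hk)) (.inr (j', i')) := by simp
  have hle := SimpleGraph.dist_le (Walk.cons a1 (Walk.cons a2 (Walk.cons a3 Walk.nil)))
  simp only [Walk.length_cons, Walk.length_nil] at hle
  have hge := phi_dist hk (Sum.inr (j, i) : VV k) (.inr (j', i'))
  have h1 : j.val < 2 := j.isLt
  have h2 : j'.val < 2 := j'.isLt
  have h3 : j.val ≠ j'.val := fun hh => h (Fin.ext hh)
  simp only [phi] at hge
  have hge' := phi_dist hk (Sum.inr (j', i') : VV k) (.inr (j, i))
  rw [SimpleGraph.dist_comm (u := (Sum.inr (j', i') : VV k))] at hge'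
  simp only [phi] at hge'
  omega

lemma diam_le (u v : VV k) : (GG k).dist u v ≤ 3 := by
  obtain (⟨j, i⟩ | ⟨j, i⟩) := u <;> obtain (⟨j', i'⟩ | ⟨j', i'⟩) := v
  · by_cases h : (j, i) = (j', i')
    · rw [h, dist_self']
      omega
    · rw [dLL h]; omega
  · by_cases h : j = j'
    · subst h; rw [dLR_same]; omega
    · rw [dLR_diff hk h]; omega
  · by_cases h : j = j'
    · subst h; rw [dRL_same]; omega
    · rw [dRL_diff hk h]; omega
  · by_cases h : j = j'
    · subst h
      by_cases h2 : i = i'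
      · rw [h2, dist_self']
        omega
      · rw [dRR_same hk h2]; omega
    · rw [dRR_diff hk h]

lemma inl_le2 (a : Fin 2 × Fin k) (v : VV k) : (GG k).dist (.inl a) v ≤ 2 := by
  obtain ⟨j, i⟩ := a
  obtain (⟨j', i'⟩ | ⟨j', i'⟩) := v
  · by_cases h : (j, i) = (j', i')
    · rw [h, dist_self']
      omega
    · rw [dLL h]; omega
  · by_cases h : j = j'
    · subst h; rw [dLR_same]; omega
    · rw [dLR_diff hk h]

lemma shape3 {j : Fin 2} {i : Fin (k+2)} {w : VV k} (h : (GG k).dist (.inr (j, i)) w = 3) :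
    ∃ m b, w = .inr (m, b) ∧ m ≠ j := by
  obtain (⟨j', i'⟩ | ⟨j', i'⟩) := w
  · by_cases hj : j = j'
    · subst hj; rw [dRL_same] at h; omega
    · rw [dRL_diff hk hj] at h; omega
  · by_cases hj : j = j'
    · subst hj
      by_cases h2 : i = i'
      · rw [h2, dist_self'] at h; omega
      · rw [dRR_same hk h2] at h; omega
    · exact ⟨j', i', rfl, Ne.symm hj⟩

lemma shape2_inl {a : Fin 2 × Fin k} {w : VV k} (h : (GG k).dist (.inl a) w = 2) :
    ∃ m b, w = .inr (m, b) ∧ m ≠ a.1 := by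
  obtain ⟨j, i⟩ := a
  obtain (⟨j', i'⟩ | ⟨j', i'⟩) := w
  · by_cases hj : (j, i) = (j', i')
    · rw [hj, dist_self'] at h; omega
    · rw [dLL hj] at h; omega
  · by_cases hj : j = j'
    · subst hj; rw [dLR_same] at h; omega
    · exact ⟨j', i', rfl, Ne.symm hj⟩

end Conn

lemma min_degree (hk : 0 < k) (v : VV k) : k ≤ ((GG k).neighborSet v).ncard := by
  rw [← Nat.card_coe_set_eq]
  obtain (⟨j, i⟩ | ⟨j, i⟩) := v
  · have : Function.Injective (fun a : Fin k =>
        (⟨.inr (j, Fin.castLE (by omega) a), by simp⟩ : ((GG k).neighborSet (.inl (j, i))))) := by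
      intro a b hab
      simpa [Fin.ext_iff] using hab
    exact (Nat.card_fin k).symm.le.trans (Nat.card_le_card_of_injective _ this)
  · have : Function.Injective (fun a : Fin k =>
        (⟨.inl (j, a), by simp⟩ : ((GG k).neighborSet (.inr (j, i))))) := by
      intro a b hab
      simpa [Fin.ext_iff] using hab
    exact (Nat.card_fin k).symm.le.trans (Nat.card_le_card_of_injective _ this)


-- === Dynamics ===
section Dyn

variable {W : Type*} [Fintype W] [DecidableEq W] (G : SimpleGraph W)

/-- contribution of `u`'s send record to vertex `v` -/
def term (sent : W → Option (W × ℕ)) (v u : W) : ℕ :=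
  match sent u with
  | none => 0
  | some p => if p.1 = v then p.2 else 0

/-- total amount ever received by `v` -/
def Rec (sent : W → Option (W × ℕ)) (v : W) : ℕ := ∑ u, term sent v u

/-- History-summary invariant. -/
def Inv (c : W → ℕ) : Prop :=
  ∃ sent : W → Option (W × ℕ),
    (∀ v, sent v = none → c v = 1 + Rec sent v) ∧
    (∀ v y s, sent v = some (y, s) →
      c v = 0 ∧ v ≠ y ∧ G.dist v y = s ∧ s = 1 + Rec sent v)

lemma inv_init : Inv G (fun _ => 1) := by
  refine ⟨fun _ => none, fun v _ => ?_, fun v y s h => by simp at h⟩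
  simp [Rec, term]

lemma Rec_update {sent : W → Option (W × ℕ)} {x y : W} {s0 : ℕ} (hsx : sent x = none) (v : W) :
    Rec (Function.update sent x (some (y, s0))) v
      = Rec sent v + (if y = v then s0 else 0) := by
  have hterm : ∀ u, term (Function.update sent x (some (y, s0))) v u
      = term sent v u + (if u = x then (if y = v then s0 else 0) else 0) := by
    intro u
    by_cases hu : u = x
    · subst hu
      simp [term, hsx]
    · simp [term, Function.update_of_ne hu, hu]
  rw [Rec, Rec]
  simp only [hterm]
  rw [Finset.sum_add_distrib, Finset.sum_ite_eq' Finset.univ x (fun _ => if y = v then s0 else 0)]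
  simp

lemma inv_step {c c' : W → ℕ} (hs : CupStep G c c') (h : Inv G c) : Inv G c' := by
  obtain ⟨x, y, hxy, hx, hy, hdist, hc'⟩ := hs
  obtain ⟨sent, hnone, hsome⟩ := h
  have hsx : sent x = none := by
    cases h : sent x with
    | none => rfl
    | some p =>
        obtain ⟨y', s'⟩ := p
        have := (hsome x y' s' h).1
        omega
  refine ⟨Function.update sent x (some (y, c x)), ?_, ?_⟩
  · intro v hv
    have hvx : v ≠ x := by
      intro hh
      rw [hh, Function.update_self] at hv
      exact nomatch hv
    rw [Function.update_of_ne hvx] at hv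
    rw [Rec_update hsx]
    by_cases hvy : v = y
    · have h1 := hnone v hv
      rw [hvy] at h1 ⊢
      rw [hc', Function.update_self, if_pos rfl]
      omega
    · rw [hc', Function.update_of_ne hvy, Function.update_of_ne hvx]
      have h1 := hnone v hv
      rw [if_neg (fun hh => hvy hh.symm)]
      omega
  · intro v y' s' hv
    by_cases hvx : v = x
    · subst hvx
      rw [Function.update_self] at hv
      simp only [Option.some.injEq, Prod.mk.injEq] at hv
      obtain ⟨h1, h2⟩ := hv
      subst h1; subst h2
      refine ⟨?_, hxy, hdist, ?_⟩
      · rw [hc', Function.update_of_ne hxy, Function.update_self]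
      · rw [Rec_update hsx, if_neg (fun hh => hxy hh.symm)]
        have := hnone _ hsx
        omega
    · rw [Function.update_of_ne hvx] at hv
      have h4 := hsome v y' s' hv
      have hvy : v ≠ y := by
        intro hh
        rw [hh] at h4
        omega
      refine ⟨?_, h4.2.1, h4.2.2.1, ?_⟩
      · rw [hc', Function.update_of_ne hvy, Function.update_of_ne hvx]
        exact h4.1
      · rw [Rec_update hsx, if_neg (fun hh => hvy hh.symm)]
        have := h4.2.2.2
        omega

lemma inv_reach {c : W → ℕ} (h : Relation.ReflTransGen (CupStep G) (fun _ => 1) c) :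
    Inv G c := by
  induction h with
  | refl => exact inv_init G
  | tail _ hstep ih => exact inv_step G hstep ih

end Dyn


section Final

variable {k : ℕ}

lemma fin2_succ_ne : ∀ x : Fin 2, x + 1 ≠ x := by decide

theorem not_stackable (hk : 0 < k) (t : VV k) : ¬ TStackable (GG k) t := by
  rintro ⟨cf, hreach, hfin⟩
  obtain ⟨sent, hnone, hsome⟩ := inv_reach (GG k) hreach
  have hsends : ∀ v : VV k, v ≠ t → ∃ y s, sent v = some (y, s) := by
    intro v hv
    cases h : sent v with
    | none =>
        have h1 := hnone v h
        rw [hfin v hv] at h1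
        omega
    | some p =>
        obtain ⟨y, s⟩ := p
        exact ⟨y, s, rfl⟩
  have recv_le : ∀ u v s, sent u = some (v, s) → s ≤ Rec sent v := by
    intro u v s h
    have h1 : term sent v u = s := by simp [term, h]
    calc s = term sent v u := h1.symm
    _ ≤ ∑ w, term sent v w :=
        Finset.single_le_sum (fun i _ => Nat.zero_le _) (Finset.mem_univ u)
  have recv_le2 : ∀ u u' v s s', u ≠ u' → sent u = some (v, s) → sent u' = some (v, s') →
      s + s' ≤ Rec sent v := by
    intro u u' v s s' huu h h'
    have h1 : ∑ w ∈ ({u, u'} : Finset (VV k)), term sent v w = s + s' := by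
      rw [Finset.sum_pair huu]
      simp [term, h, h']
    calc s + s' = _ := h1.symm
    _ ≤ ∑ w, term sent v w :=
        Finset.sum_le_sum_of_subset (Finset.subset_univ _)
  have exists_sender : ∀ v, Rec sent v ≠ 0 →
      ∃ u s, sent u = some (v, s) ∧ 1 ≤ s ∧ s ≤ Rec sent v := by
    intro v h
    rw [Rec] at h
    obtain ⟨u, _, hu⟩ := Finset.exists_ne_zero_of_sum_ne_zero h
    rcases h2 : sent u with _ | p
    · rw [term, h2] at hu
      simp at hu
    · obtain ⟨y, s⟩ := p
      rw [term, h2] at hu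
      simp only at hu
      by_cases hyv : y = v
      · subst hyv
        rw [if_pos rfl] at hu
        refine ⟨u, s, h2, by omega, recv_le u y s h2⟩
      · rw [if_neg hyv] at hu
        simp at hu
  have bump : ∀ u v s, sent u = some (v, s) → v ≠ t →
      ∃ w r, sent v = some (w, r) ∧ (GG k).dist v w = r ∧ 1 + s ≤ r := by
    intro u v s h hvt
    obtain ⟨w, r, hw⟩ := hsends v hvt
    have h4 := hsome _ _ _ hw
    refine ⟨w, r, hw, h4.2.2.1, ?_⟩
    have := recv_le u v s h
    omega
  have T3 : ∀ u v s, sent u = some (v, s) → 3 ≤ s → v ≠ t → False := by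
    intro u v s h h3 hvt
    obtain ⟨w, r, hw, hd, hr⟩ := bump u v s h hvt
    have := diam_le hk v w
    omega
  have T2inl : ∀ u (a : Fin 2 × Fin k) s, sent u = some (.inl a, s) → 2 ≤ s →
      (.inl a : VV k) ≠ t → False := by
    intro u a s h h2 hvt
    obtain ⟨w, r, hw, hd, hr⟩ := bump u _ s h hvt
    have := inl_le2 hk a w
    omega
  obtain (⟨jt, it⟩ | ⟨jt, it⟩) := t
  · -- Case t in a hub clique
    have T2 : ∀ u v s, sent u = some (v, s) → 2 ≤ s → v ≠ .inl (jt, it) → False := by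
      intro u v s h h2 hvt
      obtain (⟨m, b⟩ | ⟨m, b⟩) := v
      · exact T2inl u (m, b) s h h2 hvt
      · obtain ⟨w, r, hw, hd, hr⟩ := bump u _ s h hvt
        have hr3 : r = 3 := by
          have := diam_le hk (Sum.inr (m, b) : VV k) w
          omega
        rw [hr3] at hd hw
        obtain ⟨m', b', rfl, hm'⟩ := shape3 hk hd
        exact T3 _ _ 3 hw le_rfl (by simp)
    have T1 : ∀ u (a : Fin 2 × Fin k), sent u = some (.inl a, 1) →
        (.inl a : VV k) ≠ .inl (jt, it) → False := by
      intro u a h hvt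
      obtain ⟨w, r, hw, hd, hr⟩ := bump u _ 1 h hvt
      have hr2 : r = 2 := by
        have := inl_le2 hk a w
        omega
      rw [hr2] at hd hw
      obtain ⟨m', b', rfl, hm'⟩ := shape2_inl hk hd
      exact T2 _ _ 2 hw le_rfl (by simp)
    have hj' : jt + 1 ≠ jt := fin2_succ_ne jt
    have key : ∀ i : Fin (k+2), sent (.inr (jt + 1, i)) = some (.inl (jt, it), 2) := by
      intro i
      have hvt : (.inr (jt + 1, i) : VV k) ≠ .inl (jt, it) := by simp
      obtain ⟨y, s, h⟩ := hsends _ hvt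
      obtain ⟨-, hne, hd, hs⟩ := hsome _ _ _ h
      obtain (⟨m, b⟩ | ⟨m, b⟩) := y
      · by_cases hm : m = jt + 1
        · subst hm
          rw [dRL_same] at hd
          rw [← hd] at h
          exact (T1 _ _ h (by simp [Prod.ext_iff, hj'])).elim
        · rw [dRL_diff hk (fun hh => hm hh.symm)] at hd
          by_cases hy : (Sum.inl (m, b) : VV k) = .inl (jt, it)
          · rw [hy] at h
            rw [← hd] at h
            exact h
          · exact (T2 _ _ s h (by omega) hy).elim
      · by_cases hm : m = jt + 1
        · subst hm
          have hbi : i ≠ b := by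
            intro hh
            rw [hh] at hne
            exact hne rfl
          rw [dRR_same hk hbi] at hd
          exact (T2 _ _ s h (by omega) (by simp)).elim
        · rw [dRR_diff hk (fun hh => hm hh.symm)] at hd
          exact (T3 _ _ s h (by omega) (by simp)).elim
    have hRec : ∀ i : Fin (k+2), Rec sent (.inr (jt + 1, i)) = 1 := by
      intro i
      have h4 := (hsome _ _ _ (key i)).2.2.2
      omega
    have hSender : ∀ i : Fin (k+2), ∃ a : Fin k,
        sent (.inl (jt + 1, a)) = some (.inr (jt + 1, i), 1) := by
      intro i
      obtain ⟨u, s, hu, hs1, hsle⟩ := exists_sender _ (by rw [hRec i]; omega)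
      rw [hRec i] at hsle
      have hs : s = 1 := le_antisymm hsle hs1
      subst hs
      have hd1 : (GG k).dist u (.inr (jt + 1, i)) = 1 := (hsome _ _ _ hu).2.2.1
      have hadj := dist_eq_one_iff_adj.mp hd1
      obtain (⟨m, b⟩ | ⟨m, b⟩) := u
      · simp only [adj_inl_inr] at hadj
        subst hadj
        exact ⟨b, hu⟩
      · simp at hadj
    choose F hF using hSender
    have hinj : Function.Injective F := by
      intro i i' hii
      have h1 := hF i
      have h2 := hF i'
      rw [← hii] at h2
      rw [h1] at h2
      simp only [Option.some.injEq, Prod.mk.injEq, Sum.inr.injEq] at h2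
      exact h2.1.2
    have hcard := Fintype.card_le_of_injective F hinj
    simp only [Fintype.card_fin] at hcard
    omega
  · -- Case t in an independent part
    have key2 : ∀ i : Fin (k+2), i ≠ it → ∃ a : Fin k,
        sent (.inr (jt, i)) = some (.inl (jt, a), 1) ∨
          sent (.inl (jt, a)) = some (.inr (jt, i), 1) := by
      intro i hi
      have hvt : (.inr (jt, i) : VV k) ≠ .inr (jt, it) := by simp [hi]
      obtain ⟨y, s, h⟩ := hsends _ hvt
      obtain ⟨-, hne, hd, hs⟩ := hsome _ _ _ h
      obtain (⟨m, b⟩ | ⟨m, b⟩) := y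
      · by_cases hm : jt = m
        · subst hm
          rw [dRL_same] at hd
          rw [← hd] at h
          exact ⟨b, Or.inl h⟩
        · rw [dRL_diff hk hm] at hd
          exact ((T2inl _ _ s h (by omega) (by simp)).elim)
      · by_cases hm : jt = m
        · subst hm
          have hbi : i ≠ b := by
            intro hh
            rw [hh] at hne
            exact hne rfl
          rw [dRR_same hk hbi] at hd
          by_cases hy : b = it
          · -- y = t, so v received exactly 1
            have hRv : Rec sent (.inr (jt, i)) = 1 := by omega
            obtain ⟨u, s', hu, hs1, hsle⟩ := exists_sender _ (by rw [hRv]; omega)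
            rw [hRv] at hsle
            have hs' : s' = 1 := le_antisymm hsle hs1
            subst hs'
            have hd1 : (GG k).dist u (.inr (jt, i)) = 1 := (hsome _ _ _ hu).2.2.1
            have hadj := dist_eq_one_iff_adj.mp hd1
            obtain (⟨m', b'⟩ | ⟨m', b'⟩) := u
            · simp only [adj_inl_inr] at hadj
              subst hadj
              exact ⟨b', Or.inr hu⟩
            · simp at hadj
          · -- y in same part, y ≠ t : received 2, dies
            have hyt : (Sum.inr (jt, b) : VV k) ≠ .inr (jt, it) := by simp [hy]
            obtain ⟨w, r, hw, hdw, hr⟩ := bump _ _ s h hyt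
            have hr3 : r = 3 := by
              have := diam_le hk (Sum.inr (jt, b) : VV k) w
              omega
            rw [hr3] at hdw hw
            obtain ⟨m', b', rfl, hm'⟩ := shape3 hk hdw
            exact (T3 _ _ 3 hw le_rfl (by simp [Prod.ext_iff, hm'])).elim
        · rw [dRR_diff hk hm] at hd
          exact (T3 _ _ s h (by omega) (by simp [Prod.ext_iff, Ne.symm hm])).elim
    have key2' : ∀ p : {i : Fin (k+2) // i ≠ it}, ∃ a : Fin k,
        sent (.inr (jt, p.1)) = some (.inl (jt, a), 1) ∨
          sent (.inl (jt, a)) = some (.inr (jt, p.1), 1) :=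
      fun p => key2 p.1 p.2
    choose F hF using key2'
    have hinj : Function.Injective F := by
      intro p q hpq
      by_cases hne : p.1 = q.1
      · exact Subtype.ext hne
      exfalso
      have hp := hF p
      have hq := hF q
      rw [hpq] at hp
      rcases hp with hp | hp <;> rcases hq with hq | hq
      · -- both type A: two senders into inl (jt, F q)
        have h2 := recv_le2 _ _ _ _ _ (by simp [hne]) hp hq
        have hyt : (Sum.inl (jt, F q) : VV k) ≠ .inr (jt, it) := by simp
        obtain ⟨w, r, hw, hdw, hr⟩ := bump _ _ 1 hp hyt
        have hr' := (hsome _ _ _ hw).2.2.2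
        have := inl_le2 hk (jt, F q) w
        omega
      · -- A for p, B for q: the hub vertex both sends 1 and received ≥ 1
        have h1 := recv_le _ _ _ hp
        have h2 := (hsome _ _ _ hq).2.2.2
        omega
      · -- B for p, A for q
        have h1 := recv_le _ _ _ hq
        have h2 := (hsome _ _ _ hp).2.2.2
        omega
      · -- both type B: same sender two targets
        rw [hp] at hq
        simp only [Option.some.injEq, Prod.mk.injEq, Sum.inr.injEq] at hq
        exact hne hq.1.2
    have hcard := Fintype.card_le_of_injective F hinj
    have hcard2 : Fintype.card {i : Fin (k+2) // i ≠ it} = k + 1 := by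
      rw [Fintype.card_subtype_compl]
      simp [Fintype.card_subtype_eq]
    rw [hcard2] at hcard
    simp only [Fintype.card_fin] at hcard
    omega

end Final

end CupNS

theorem exists_strongly_non_stackable_min_degree (c : ℕ) (hc : 1 ≤ c) :
    ∃ (V : Type) (_ : Fintype V) (_ : DecidableEq V) (G : SimpleGraph V),
      G.Connected ∧ (∀ v : V, c ≤ (G.neighborSet v).ncard) ∧
      ∀ t : V, ¬ TStackable G t := by
  exact ⟨CupNS.VV c, inferInstance, inferInstance, CupNS.GG c,
    CupNS.conn hc, CupNS.min_degree hc, CupNS.not_stackable hc⟩
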